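/- For every choice of the real parameters ζ₁₁, ζ₂₂, ζ₃₃, ζ₁₂, ζ₁₃, ζ₂₃, ξ₁₁, ξ₂₂, ξ₃₃, ξ₁₂, ξ₁₃, ξ₂₃ and all i, j ∈ {1,...,4}, the function η̃_{ij}(x) := h_{ij}(x)·|x|²/4 satisfies ∑_{l=1}^4 ∂_l²(η̃_{ij})(x) = −2·h_{ij}(x) for all x ∈ ℝ⁴∖{0}; equivalently, for the geometer's Laplacian Δ = −∑_{l=1}^4 ∂_l², Δη̃_{ij} = 2h_{ij}. -/

import Mathlib

open scoped BigOperators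

noncomputable section

/-- Partial derivative in the `i`-th coordinate direction. -/
def pd {n : ℕ} (i : Fin n) (f : (Fin n → ℝ) → ℝ) : (Fin n → ℝ) → ℝ :=
  fun x => fderiv ℝ f x (Pi.single i 1)

/-- The complex structure `I₁` on `ℝ⁴`. -/
def I1 : Matrix (Fin 4) (Fin 4) ℝ :=
  !![0, -1, 0, 0; 1, 0, 0, 0; 0, 0, 0, -1; 0, 0, 1, 0]

/-- The complex structure `I₂` on `ℝ⁴`. -/
def I2 : Matrix (Fin 4) (Fin 4) ℝ :=
  !![0, 0, -1, 0; 0, 0, 0, 1; 1, 0, 0, 0; 0, -1, 0, 0]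

/-- The complex structure `I₃ = I₁ I₂` on `ℝ⁴`. -/
def I3 : Matrix (Fin 4) (Fin 4) ℝ := I1 * I2

/-- `α_J(x) = Jᵀ x`. -/
def alphaVec (J : Matrix (Fin 4) (Fin 4) ℝ) (x : Fin 4 → ℝ) : Fin 4 → ℝ :=
  Matrix.mulVec (Matrix.transpose J) x

/-- The outer product `A_{JK}(x) = α_J(x) · α_K(x)ᵀ`. -/
def Amat (J K : Matrix (Fin 4) (Fin 4) ℝ) (x : Fin 4 → ℝ) : Matrix (Fin 4) (Fin 4) ℝ :=
  Matrix.vecMulVec (alphaVec J x) (alphaVec K x)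

/-- The leading term `h⁺` of the expansion of an ALE metric,
`h⁺(x) = −(2/(3 r⁶)) · [ζ₁₁(2A₁₁−A₂₂−A₃₃) + ζ₂₂(2A₂₂−A₁₁−A₃₃) + ζ₃₃(2A₃₃−A₁₁−A₂₂)
          + ζ₁₂(A₁₂+A₂₁) + ζ₁₃(A₁₃+A₃₁) + ζ₂₃(A₂₃+A₃₂)]`. -/
def hplus (ζ11 ζ22 ζ33 ζ12 ζ13 ζ23 : ℝ) (x : Fin 4 → ℝ) : Matrix (Fin 4) (Fin 4) ℝ :=
  (-(2 / (3 * (∑ i, x i ^ 2) ^ 3))) •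
    (ζ11 • ((2 : ℝ) • Amat I1 I1 x - Amat I2 I2 x - Amat I3 I3 x) +
     ζ22 • ((2 : ℝ) • Amat I2 I2 x - Amat I1 I1 x - Amat I3 I3 x) +
     ζ33 • ((2 : ℝ) • Amat I3 I3 x - Amat I1 I1 x - Amat I2 I2 x) +
     ζ12 • (Amat I1 I2 x + Amat I2 I1 x) +
     ζ13 • (Amat I1 I3 x + Amat I3 I1 x) +
     ζ23 • (Amat I2 I3 x + Amat I3 I2 x))

/-- The reflection `ℛ = diag(1,−1,−1,−1)`. -/
def Rrefl : Matrix (Fin 4) (Fin 4) ℝ := Matrix.diagonal ![1, -1, -1, -1]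

/-- `h⁻(x) = ℛ · h⁺_ξ(ℛ x) · ℛ`. -/
def hminus (ξ11 ξ22 ξ33 ξ12 ξ13 ξ23 : ℝ) (x : Fin 4 → ℝ) : Matrix (Fin 4) (Fin 4) ℝ :=
  Rrefl * hplus ξ11 ξ22 ξ33 ξ12 ξ13 ξ23 (Matrix.mulVec Rrefl x) * Rrefl

/-- `h = h⁺ + h⁻`. -/
def hfull (ζ11 ζ22 ζ33 ζ12 ζ13 ζ23 ξ11 ξ22 ξ33 ξ12 ξ13 ξ23 : ℝ)
    (x : Fin 4 → ℝ) : Matrix (Fin 4) (Fin 4) ℝ :=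
  hplus ζ11 ζ22 ζ33 ζ12 ζ13 ζ23 x + hminus ξ11 ξ22 ξ33 ξ12 ξ13 ξ23 x

def S4 (y : Fin 4 → ℝ) : ℝ := ∑ m, y m ^ 2
def Qf (C : Fin 4 → Fin 4 → ℝ) (y : Fin 4 → ℝ) : ℝ := ∑ p, ∑ q, C p q * y p * y q
def Df (C : Fin 4 → Fin 4 → ℝ) (l : Fin 4) (y : Fin 4 → ℝ) : ℝ :=
  (∑ q, C l q * y q) + (∑ p, C p l * y p)
def G3 (C : Fin 4 → Fin 4 → ℝ) (l : Fin 4) (y : Fin 4 → ℝ) : ℝ :=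
  4⁻¹ * (Df C l y * ((S4 y)⁻¹ * (S4 y)⁻¹)) -
    Qf C y * ((S4 y)⁻¹ * ((S4 y)⁻¹ * ((S4 y)⁻¹ * y l)))

def LSm (y : Fin 4 → ℝ) : (Fin 4 → ℝ) →L[ℝ] ℝ :=
  ∑ m, (y m • ContinuousLinearMap.proj m + y m • ContinuousLinearMap.proj m)
def LQ (C : Fin 4 → Fin 4 → ℝ) (y : Fin 4 → ℝ) : (Fin 4 → ℝ) →L[ℝ] ℝ :=
  ∑ p, ∑ q, ((C p q * y p) • ContinuousLinearMap.proj q +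
    y q • (C p q • ContinuousLinearMap.proj p))
def LD (C : Fin 4 → Fin 4 → ℝ) (l : Fin 4) : (Fin 4 → ℝ) →L[ℝ] ℝ :=
  (∑ q, C l q • ContinuousLinearMap.proj q) + (∑ p, C p l • ContinuousLinearMap.proj p)

lemma hproj (p : Fin 4) (y : Fin 4 → ℝ) :
    HasFDerivAt (fun z : Fin 4 → ℝ => z p)
      (ContinuousLinearMap.proj (R := ℝ) (φ := fun _ : Fin 4 => ℝ) p) y :=
  (ContinuousLinearMap.proj (R := ℝ) (φ := fun _ : Fin 4 => ℝ) p).hasFDerivAt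

lemma hS4 (y : Fin 4 → ℝ) : HasFDerivAt S4 (LSm y) y := by
  have hfun : S4 = fun z : Fin 4 → ℝ => ∑ m, z m * z m := by
    funext z; simp [S4, sq]
  rw [hfun, LSm]
  exact HasFDerivAt.fun_sum (fun m _ => (hproj m y).fun_mul (hproj m y))

lemma hW (y : Fin 4 → ℝ) (hy : S4 y ≠ 0) :
    HasFDerivAt (fun z => (S4 z)⁻¹) (-((S4 y ^ 2)⁻¹ • LSm y)) y := by
  simpa [Function.comp_def] using (hasDerivAt_inv hy).comp_hasFDerivAt y (hS4 y)

lemma hQf (C : Fin 4 → Fin 4 → ℝ) (y : Fin 4 → ℝ) : HasFDerivAt (Qf C) (LQ C y) y := by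
  unfold Qf LQ
  exact HasFDerivAt.fun_sum fun p _ => HasFDerivAt.fun_sum fun q _ =>
    ((hproj p y).const_mul (C p q)).fun_mul (hproj q y)

lemma hDf (C : Fin 4 → Fin 4 → ℝ) (l : Fin 4) (y : Fin 4 → ℝ) :
    HasFDerivAt (Df C l) (LD C l) y := by
  unfold Df LD
  exact (HasFDerivAt.fun_sum fun q _ => (hproj q y).const_mul (C l q)).add
    (HasFDerivAt.fun_sum fun p _ => (hproj p y).const_mul (C p l))

lemma sum_if_const (c : Prop) [Decidable c] (f : Fin 4 → ℝ) :
    ∑ a : Fin 4, (if c then f a else 0) = if c then ∑ a, f a else 0 := by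
  split <;> simp

lemma pdA (C : Fin 4 → Fin 4 → ℝ) (l : Fin 4) (y : Fin 4 → ℝ) (hy : S4 y ≠ 0) :
    pd l (fun z => 4⁻¹ * (Qf C z * ((S4 z)⁻¹ * (S4 z)⁻¹))) y = G3 C l y := by
  have hF2 := ((hQf C y).mul ((hW y hy).mul (hW y hy))).const_mul (4:ℝ)⁻¹
  have hfd : fderiv ℝ (fun z => 4⁻¹ * (Qf C z * ((S4 z)⁻¹ * (S4 z)⁻¹))) y = _ := hF2.fderiv
  simp only [pd, hfd]
  simp only [LQ, LSm, ContinuousLinearMap.sum_apply, ContinuousLinearMap.add_apply,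
    ContinuousLinearMap.sub_apply, ContinuousLinearMap.smul_apply,
    ContinuousLinearMap.proj_apply, ContinuousLinearMap.neg_apply, smul_eq_mul,
    Pi.single_apply, mul_ite, mul_one, mul_zero, ite_mul, zero_mul,
    Finset.sum_add_distrib, sum_if_const, Finset.sum_ite_eq', Finset.mem_univ, if_true, Pi.mul_apply]
  rw [G3, Df, Qf]
  simp only [Fin.sum_univ_four]
  field_simp
  ring

lemma pdB (C : Fin 4 → Fin 4 → ℝ) (l : Fin 4) (y : Fin 4 → ℝ) (hy : S4 y ≠ 0) :
    pd l (G3 C l) y =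
      2 * C l l * ((S4 y)⁻¹ * (S4 y)⁻¹) / 4
        - 2 * (Df C l y * y l) * ((S4 y)⁻¹ * (S4 y)⁻¹ * (S4 y)⁻¹)
        + 6 * (Qf C y * y l ^ 2) * ((S4 y)⁻¹ * (S4 y)⁻¹ * (S4 y)⁻¹ * (S4 y)⁻¹)
        - Qf C y * ((S4 y)⁻¹ * (S4 y)⁻¹ * (S4 y)⁻¹) := by
  have hG3 := (((hDf C l y).mul ((hW y hy).mul (hW y hy))).const_mul (4:ℝ)⁻¹).sub
    ((hQf C y).mul ((hW y hy).mul ((hW y hy).mul ((hW y hy).mul (hproj l y)))))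
  have hfd : fderiv ℝ (G3 C l) y = _ := hG3.fderiv
  simp only [pd, hfd]
  simp only [LQ, LSm, LD, ContinuousLinearMap.sum_apply, ContinuousLinearMap.add_apply,
    ContinuousLinearMap.sub_apply, ContinuousLinearMap.smul_apply,
    ContinuousLinearMap.proj_apply, ContinuousLinearMap.neg_apply, smul_eq_mul,
    Pi.single_apply, mul_ite, mul_one, mul_zero, ite_mul, zero_mul,
    Finset.sum_add_distrib, sum_if_const, Finset.sum_ite_eq', Finset.mem_univ, if_true, Pi.mul_apply]
  rw [Df, Qf]
  simp only [Fin.sum_univ_four]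
  field_simp
  ring

lemma euler (C : Fin 4 → Fin 4 → ℝ) (x : Fin 4 → ℝ) :
    ∑ l, Df C l x * x l = 2 * Qf C x := by
  simp only [Df, Qf, Fin.sum_univ_four]
  ring

lemma sumsq (x : Fin 4 → ℝ) : ∑ l, x l ^ 2 = S4 x := rfl

lemma keysum (C : Fin 4 → Fin 4 → ℝ) (htr : ∑ p, C p p = 0) (x : Fin 4 → ℝ)
    (hx : S4 x ≠ 0) :
    ∑ l, pd l (G3 C l) x =
      -2 * (Qf C x * ((S4 x)⁻¹ * ((S4 x)⁻¹ * (S4 x)⁻¹))) := by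
  have h1 : ∑ l, pd l (G3 C l) x =
      (∑ l, C l l) * (2 * ((S4 x)⁻¹ * (S4 x)⁻¹) / 4)
        - 2 * (∑ l, Df C l x * x l) * ((S4 x)⁻¹ * (S4 x)⁻¹ * (S4 x)⁻¹)
        + 6 * Qf C x * (∑ l, x l ^ 2) * ((S4 x)⁻¹ * (S4 x)⁻¹ * (S4 x)⁻¹ * (S4 x)⁻¹)
        - 4 * (Qf C x * ((S4 x)⁻¹ * (S4 x)⁻¹ * (S4 x)⁻¹)) := by
    rw [Finset.sum_congr rfl (fun l _ => pdB C l x hx)]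
    simp only [Fin.sum_univ_four]
    ring
  rw [h1, htr, euler, sumsq]
  field_simp
  ring

lemma I3_eq : I3 = !![0,0,0,-1; 0,0,-1,0; 0,1,0,0; 1,0,0,0] := by
  ext i j
  rw [show I3 = I1 * I2 from rfl, Matrix.mul_apply]
  fin_cases i <;> fin_cases j <;>
    norm_num [I1, I2, Fin.sum_univ_four, Matrix.vecHead, Matrix.vecTail, Fin.ext_iff, Matrix.cons_val_two, Matrix.cons_val_three]

def dvec : Fin 4 → ℝ := ![1, -1, -1, -1]

lemma e11 (i j : Fin 4) : ∑ p, I1 p i * I1 p j = if i = j then 1 else 0 := by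
  fin_cases i <;> fin_cases j <;>
    norm_num [I1, Fin.sum_univ_four, Matrix.vecHead, Matrix.vecTail, Fin.ext_iff, Matrix.cons_val_two, Matrix.cons_val_three]
lemma e22 (i j : Fin 4) : ∑ p, I2 p i * I2 p j = if i = j then 1 else 0 := by
  fin_cases i <;> fin_cases j <;>
    norm_num [I2, Fin.sum_univ_four, Matrix.vecHead, Matrix.vecTail, Fin.ext_iff, Matrix.cons_val_two, Matrix.cons_val_three]
lemma e33 (i j : Fin 4) : ∑ p, I3 p i * I3 p j = if i = j then 1 else 0 := by
  fin_cases i <;> fin_cases j <;>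
    norm_num [I3_eq, Fin.sum_univ_four, Matrix.vecHead, Matrix.vecTail, Fin.ext_iff, Matrix.cons_val_two, Matrix.cons_val_three]
lemma f12 (i j : Fin 4) : (∑ p, I1 p i * I2 p j) + (∑ p, I2 p i * I1 p j) = 0 := by
  fin_cases i <;> fin_cases j <;>
    norm_num [I1, I2, Fin.sum_univ_four, Matrix.vecHead, Matrix.vecTail, Fin.ext_iff, Matrix.cons_val_two, Matrix.cons_val_three]
lemma f13 (i j : Fin 4) : (∑ p, I1 p i * I3 p j) + (∑ p, I3 p i * I1 p j) = 0 := by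
  fin_cases i <;> fin_cases j <;>
    norm_num [I1, I3_eq, Fin.sum_univ_four, Matrix.vecHead, Matrix.vecTail, Fin.ext_iff, Matrix.cons_val_two, Matrix.cons_val_three]
lemma f23 (i j : Fin 4) : (∑ p, I2 p i * I3 p j) + (∑ p, I3 p i * I2 p j) = 0 := by
  fin_cases i <;> fin_cases j <;>
    norm_num [I2, I3_eq, Fin.sum_univ_four, Matrix.vecHead, Matrix.vecTail, Fin.ext_iff, Matrix.cons_val_two, Matrix.cons_val_three]

def Cpart (z11 z22 z33 z12 z13 z23 : ℝ) (i j p q : Fin 4) : ℝ :=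
  -(2/3) * (z11 * (2 * I1 p i * I1 q j - I2 p i * I2 q j - I3 p i * I3 q j)
          + z22 * (2 * I2 p i * I2 q j - I1 p i * I1 q j - I3 p i * I3 q j)
          + z33 * (2 * I3 p i * I3 q j - I1 p i * I1 q j - I2 p i * I2 q j)
          + z12 * (I1 p i * I2 q j + I2 p i * I1 q j)
          + z13 * (I1 p i * I3 q j + I3 p i * I1 q j)
          + z23 * (I2 p i * I3 q j + I3 p i * I2 q j))
def Cfull (z11 z22 z33 z12 z13 z23 w11 w22 w33 w12 w13 w23 : ℝ) (i j p q : Fin 4) : ℝ :=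
  Cpart z11 z22 z33 z12 z13 z23 i j p q +
    dvec i * dvec j * dvec p * dvec q * Cpart w11 w22 w33 w12 w13 w23 i j p q

lemma trace_Cpart (z11 z22 z33 z12 z13 z23 : ℝ) (i j : Fin 4) :
    ∑ p, Cpart z11 z22 z33 z12 z13 z23 i j p p = 0 := by
  have expand : ∑ p, Cpart z11 z22 z33 z12 z13 z23 i j p p =
      -(2/3) * (z11 * (2 * (∑ p, I1 p i * I1 p j) - (∑ p, I2 p i * I2 p j)
            - (∑ p, I3 p i * I3 p j))
        + z22 * (2 * (∑ p, I2 p i * I2 p j) - (∑ p, I1 p i * I1 p j)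
            - (∑ p, I3 p i * I3 p j))
        + z33 * (2 * (∑ p, I3 p i * I3 p j) - (∑ p, I1 p i * I1 p j)
            - (∑ p, I2 p i * I2 p j))
        + z12 * ((∑ p, I1 p i * I2 p j) + (∑ p, I2 p i * I1 p j))
        + z13 * ((∑ p, I1 p i * I3 p j) + (∑ p, I3 p i * I1 p j))
        + z23 * ((∑ p, I2 p i * I3 p j) + (∑ p, I3 p i * I2 p j))) := by
    simp only [Cpart, Fin.sum_univ_four]; ring
  rw [expand, e11, e22, e33, f12, f13, f23]
  ring

lemma hdv (p : Fin 4) : dvec p * dvec p = 1 := by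
  fin_cases p <;> norm_num [dvec]

lemma trace_Cfull (z11 z22 z33 z12 z13 z23 w11 w22 w33 w12 w13 w23 : ℝ) (i j : Fin 4) :
    ∑ p, Cfull z11 z22 z33 z12 z13 z23 w11 w22 w33 w12 w13 w23 i j p p = 0 := by
  have h2 : ∀ p, Cfull z11 z22 z33 z12 z13 z23 w11 w22 w33 w12 w13 w23 i j p p =
      Cpart z11 z22 z33 z12 z13 z23 i j p p +
        dvec i * dvec j * Cpart w11 w22 w33 w12 w13 w23 i j p p := by
    intro p
    rw [Cfull]
    linear_combination Cpart w11 w22 w33 w12 w13 w23 i j p p * dvec i * dvec j * (hdv p)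
  rw [Finset.sum_congr rfl (fun p _ => h2 p), Finset.sum_add_distrib, ← Finset.mul_sum,
    trace_Cpart, trace_Cpart, mul_zero, add_zero]

lemma Qf_prod (A B : Matrix (Fin 4) (Fin 4) ℝ) (i j : Fin 4) (y : Fin 4 → ℝ) :
    Qf (fun p q => A p i * B q j) y = alphaVec A y i * alphaVec B y j := by
  simp only [Qf, alphaVec, Matrix.mulVec, dotProduct, Matrix.transpose_apply,
    Fin.sum_univ_four]
  ring

lemma Qf_Cpart (z11 z22 z33 z12 z13 z23 : ℝ) (i j : Fin 4) (y : Fin 4 → ℝ) :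
    Qf (fun p q => Cpart z11 z22 z33 z12 z13 z23 i j p q) y =
      -(2/3) * (z11 * (2 * (alphaVec I1 y i * alphaVec I1 y j)
            - alphaVec I2 y i * alphaVec I2 y j - alphaVec I3 y i * alphaVec I3 y j)
        + z22 * (2 * (alphaVec I2 y i * alphaVec I2 y j)
            - alphaVec I1 y i * alphaVec I1 y j - alphaVec I3 y i * alphaVec I3 y j)
        + z33 * (2 * (alphaVec I3 y i * alphaVec I3 y j)
            - alphaVec I1 y i * alphaVec I1 y j - alphaVec I2 y i * alphaVec I2 y j)
        + z12 * (alphaVec I1 y i * alphaVec I2 y j + alphaVec I2 y i * alphaVec I1 y j)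
        + z13 * (alphaVec I1 y i * alphaVec I3 y j + alphaVec I3 y i * alphaVec I1 y j)
        + z23 * (alphaVec I2 y i * alphaVec I3 y j + alphaVec I3 y i * alphaVec I2 y j)) := by
  simp only [Qf, Cpart, alphaVec, Matrix.mulVec, dotProduct, Matrix.transpose_apply,
    Fin.sum_univ_four]
  ring

lemma hs_inv (y : Fin 4 → ℝ) (hy : S4 y ≠ 0) :
    -(2 / (3 * (∑ i, y i ^ 2) ^ 3)) =
      -(2/3) * ((S4 y)⁻¹ * ((S4 y)⁻¹ * (S4 y)⁻¹)) := by
  have h : (∑ i, y i ^ 2) = S4 y := rfl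
  rw [h]
  field_simp

lemma hplus_entry (z11 z22 z33 z12 z13 z23 : ℝ) (i j : Fin 4) (y : Fin 4 → ℝ)
    (hy : S4 y ≠ 0) :
    hplus z11 z22 z33 z12 z13 z23 y i j =
      Qf (fun p q => Cpart z11 z22 z33 z12 z13 z23 i j p q) y *
        ((S4 y)⁻¹ * ((S4 y)⁻¹ * (S4 y)⁻¹)) := by
  rw [Qf_Cpart]
  simp only [hplus, Amat, Matrix.smul_apply, Matrix.add_apply, Matrix.sub_apply,
    Matrix.vecMulVec_apply, smul_eq_mul, hs_inv y hy]
  ring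

lemma S4_R (y : Fin 4 → ℝ) : S4 (Matrix.mulVec (Matrix.diagonal dvec) y) = S4 y := by
  simp [S4, dvec, Matrix.mulVec_diagonal, Fin.sum_univ_four, Matrix.vecHead, Matrix.vecTail]

lemma Qf_R (C : Fin 4 → Fin 4 → ℝ) (y : Fin 4 → ℝ) :
    Qf C (Matrix.mulVec (Matrix.diagonal dvec) y) =
      Qf (fun p q => C p q * (dvec p * dvec q)) y := by
  simp only [Qf, Matrix.mulVec_diagonal, dvec, Fin.sum_univ_four]
  norm_num [Matrix.vecHead, Matrix.vecTail, Matrix.cons_val_two, Matrix.cons_val_three]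

lemma hminus_entry (w11 w22 w33 w12 w13 w23 : ℝ) (i j : Fin 4) (y : Fin 4 → ℝ)
    (hy : S4 y ≠ 0) :
    hminus w11 w22 w33 w12 w13 w23 y i j =
      dvec i * dvec j *
        (Qf (fun p q => Cpart w11 w22 w33 w12 w13 w23 i j p q * (dvec p * dvec q)) y *
          ((S4 y)⁻¹ * ((S4 y)⁻¹ * (S4 y)⁻¹))) := by
  have hy' : S4 (Matrix.mulVec (Matrix.diagonal dvec) y) ≠ 0 := by rw [S4_R]; exact hy
  rw [hminus, show Rrefl = Matrix.diagonal dvec from rfl, Matrix.mul_diagonal,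
    Matrix.diagonal_mul,
    hplus_entry w11 w22 w33 w12 w13 w23 i j _ hy', Qf_R, S4_R]
  ring

lemma Qf_Cfull (z11 z22 z33 z12 z13 z23 w11 w22 w33 w12 w13 w23 : ℝ) (i j : Fin 4)
    (y : Fin 4 → ℝ) :
    Qf (Cfull z11 z22 z33 z12 z13 z23 w11 w22 w33 w12 w13 w23 i j) y =
      Qf (fun p q => Cpart z11 z22 z33 z12 z13 z23 i j p q) y +
        dvec i * dvec j *
          Qf (fun p q => Cpart w11 w22 w33 w12 w13 w23 i j p q * (dvec p * dvec q)) y := by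
  simp only [Qf, Cfull, Fin.sum_univ_four]
  ring

lemma entry (z11 z22 z33 z12 z13 z23 w11 w22 w33 w12 w13 w23 : ℝ) (i j : Fin 4)
    (y : Fin 4 → ℝ) (hy : S4 y ≠ 0) :
    hfull z11 z22 z33 z12 z13 z23 w11 w22 w33 w12 w13 w23 y i j =
      Qf (Cfull z11 z22 z33 z12 z13 z23 w11 w22 w33 w12 w13 w23 i j) y *
        ((S4 y)⁻¹ * ((S4 y)⁻¹ * (S4 y)⁻¹)) := by
  rw [hfull, Matrix.add_apply, hplus_entry z11 z22 z33 z12 z13 z23 i j y hy,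
    hminus_entry w11 w22 w33 w12 w13 w23 i j y hy, Qf_Cfull]
  ring

/-- The function `η̃ᵢⱼ(x) = hᵢⱼ(x)·|x|²/4` satisfies `∑ₗ ∂ₗ² η̃ᵢⱼ = −2 hᵢⱼ` on `ℝ⁴ ∖ {0}`;
i.e. for the geometer's Laplacian `Δ = −∑ₗ ∂ₗ²` we have `Δ η̃ᵢⱼ = 2 hᵢⱼ`. -/
theorem laplacian_etaTilde
    (ζ11 ζ22 ζ33 ζ12 ζ13 ζ23 ξ11 ξ22 ξ33 ξ12 ξ13 ξ23 : ℝ) (i j : Fin 4)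
    (x : Fin 4 → ℝ) (hx : x ≠ 0) :
    ∑ l, pd l (pd l
        (fun y => hfull ζ11 ζ22 ζ33 ζ12 ζ13 ζ23 ξ11 ξ22 ξ33 ξ12 ξ13 ξ23 y i j *
          (∑ m, y m ^ 2) / 4)) x
      = -2 * hfull ζ11 ζ22 ζ33 ζ12 ζ13 ζ23 ξ11 ξ22 ξ33 ξ12 ξ13 ξ23 x i j := by
  classical
  set C := Cfull ζ11 ζ22 ζ33 ζ12 ζ13 ζ23 ξ11 ξ22 ξ33 ξ12 ξ13 ξ23 i j with hC
  have hxS : S4 x ≠ 0 := by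
    obtain ⟨m, hm⟩ := Function.ne_iff.mp hx
    have : 0 < S4 x :=
      Finset.sum_pos' (fun m _ => sq_nonneg _)
        ⟨m, Finset.mem_univ m, (sq_nonneg (x m)).lt_of_ne (Ne.symm (pow_ne_zero 2 hm))⟩
    exact ne_of_gt this
  have hUopen : IsOpen {y : Fin 4 → ℝ | S4 y ≠ 0} := by
    have hcont : Continuous S4 :=
      continuous_finset_sum _ (fun m _ => (continuous_apply m).pow 2)
    exact isOpen_compl_singleton.preimage hcont
  have hmemU : ∀ y : Fin 4 → ℝ, S4 y ≠ 0 → {y : Fin 4 → ℝ | S4 y ≠ 0} ∈ nhds y :=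
    fun y hy => hUopen.mem_nhds hy
  set F : (Fin 4 → ℝ) → ℝ := fun y =>
    hfull ζ11 ζ22 ζ33 ζ12 ζ13 ζ23 ξ11 ξ22 ξ33 ξ12 ξ13 ξ23 y i j * (∑ m, y m ^ 2) / 4
    with hF
  set F2 : (Fin 4 → ℝ) → ℝ := fun z => 4⁻¹ * (Qf C z * ((S4 z)⁻¹ * (S4 z)⁻¹)) with hF2
  have hFeq : ∀ y, S4 y ≠ 0 → F y = F2 y := by
    intro y hy
    rw [hF, hF2]
    simp only
    rw [entry ζ11 ζ22 ζ33 ζ12 ζ13 ζ23 ξ11 ξ22 ξ33 ξ12 ξ13 ξ23 i j y hy]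
    have hSy : (∑ m, y m ^ 2) = S4 y := rfl
    rw [hSy, hC]
    field_simp
  have step1 : ∀ (l : Fin 4) (y : Fin 4 → ℝ), S4 y ≠ 0 → pd l F y = G3 C l y := by
    intro l y hy
    have hev : F =ᶠ[nhds y] F2 :=
      Filter.eventuallyEq_of_mem (hmemU y hy) (fun z hz => hFeq z hz)
    have hfd : fderiv ℝ F y = fderiv ℝ F2 y := hev.fderiv_eq
    rw [pd, hfd]
    exact pdA C l y hy
  have step2 : ∀ l : Fin 4, pd l (pd l F) x = pd l (G3 C l) x := by
    intro l
    have hev : pd l F =ᶠ[nhds x] G3 C l :=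
      Filter.eventuallyEq_of_mem (hmemU x hxS) (fun z hz => step1 l z hz)
    rw [pd, hev.fderiv_eq]
    rfl
  calc ∑ l, pd l (pd l F) x = ∑ l, pd l (G3 C l) x :=
        Finset.sum_congr rfl (fun l _ => step2 l)
    _ = -2 * (Qf C x * ((S4 x)⁻¹ * ((S4 x)⁻¹ * (S4 x)⁻¹))) :=
        keysum C (trace_Cfull ζ11 ζ22 ζ33 ζ12 ζ13 ζ23 ξ11 ξ22 ξ33 ξ12 ξ13 ξ23 i j) x hxS
    _ = -2 * hfull ζ11 ζ22 ζ33 ζ12 ζ13 ζ23 ξ11 ξ22 ξ33 ξ12 ξ13 ξ23 x i j := by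
        rw [entry ζ11 ζ22 ζ33 ζ12 ζ13 ζ23 ξ11 ξ22 ξ33 ξ12 ξ13 ξ23 i j x hxS, hC]
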